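/- arXiv:2004.06242 — 4 statements merged into one kernel-verified Lean document; each statement's English description precedes it below -/
import Mathlib

section
/- The real algebraic set {(w,x,y,z) ∈ ℝ⁴ : w+x+y+z = 3+wy and wy = xz} is a smooth surface, i.e. at every point of the set the Jacobian of the two defining polynomials has rank 2. -/
lemma rank_eq_two_of_det_submatrix_ne_zero (A : Matrix (Fin 2) (Fin 4) ℝ)
    (f : Fin 2 → Fin 4) (h : (A.submatrix id f).det ≠ 0) : A.rank = 2 := by
  refine le_antisymm (le_trans A.rank_le_card_height (by simp)) ?_
  have hunit : IsUnit (A.submatrix id f) :=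
    (Matrix.isUnit_iff_isUnit_det _).2 (isUnit_iff_ne_zero.2 h)
  have h2 : (A.submatrix id f).rank = 2 := by
    simpa using Matrix.rank_of_isUnit _ hunit
  have hmul : A * (1 : Matrix (Fin 4) (Fin 4) ℝ).submatrix (Equiv.refl _) f
      = A.submatrix id f := by
    rw [Matrix.mul_submatrix_one]
    rfl
  calc 2 = (A.submatrix id f).rank := h2.symm
    _ = (A * (1 : Matrix (Fin 4) (Fin 4) ℝ).submatrix (Equiv.refl _) f).rank := by rw [hmul]
    _ ≤ A.rank := Matrix.rank_mul_le_left _ _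

/-- The real algebraic set {(w,x,y,z) : w+x+y+z = 3+wy, wy = xz} is smooth:
at every point of the set, the Jacobian matrix of the two defining polynomials
has rank 2. -/
theorem jacobian_rank_two (w x y z : ℝ)
    (h1 : w + x + y + z = 3 + w * y) (h2 : w * y = x * z) :
    (!![1 - y, 1, 1 - w, 1; y, -z, w, -x] : Matrix (Fin 2) (Fin 4) ℝ).rank = 2 := by
  by_cases hw : w = y
  · by_cases hx : x = z
    · -- use columns 1,2 : det = w + z - w*z, nonzero
      apply rank_eq_two_of_det_submatrix_ne_zero _ ![1, 2]
      have : ((!![1 - y, 1, 1 - w, 1; y, -z, w, -x] : Matrix (Fin 2) (Fin 4) ℝ).submatrix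
          id ![1, 2]).det = w + z - w * z := by
        simp [Matrix.det_fin_two]
        ring
      rw [this]
      intro hc
      subst hw hx
      nlinarith [sq_nonneg (w - x), sq_nonneg (w + x), sq_nonneg w, sq_nonneg x,
        sq_nonneg (w + x - 3), sq_nonneg (w*x - 3)]
    · -- columns 1,3 : det = z - x ≠ 0
      apply rank_eq_two_of_det_submatrix_ne_zero _ ![1, 3]
      have : ((!![1 - y, 1, 1 - w, 1; y, -z, w, -x] : Matrix (Fin 2) (Fin 4) ℝ).submatrix
          id ![1, 3]).det = z - x := by
        simp [Matrix.det_fin_two]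
        ring
      rw [this]
      exact sub_ne_zero.2 fun hc => hx hc.symm
  · -- columns 0,2 : det = w - y ≠ 0
    apply rank_eq_two_of_det_submatrix_ne_zero _ ![0, 2]
    have : ((!![1 - y, 1, 1 - w, 1; y, -z, w, -x] : Matrix (Fin 2) (Fin 4) ℝ).submatrix
        id ![0, 2]).det = w - y := by
      simp [Matrix.det_fin_two]
      ring
    rw [this]
    exact sub_ne_zero.2 hw
end

section
/- Let A, B be the matrices above with a₁ = a₂ = b₃ = b₄ = 1. Then the linear actions of A and B on ℝ⁴ each permute the set of five lines spanned by e₁, e₂, e₃, e₄, and e₁+e₂-e₃-e₄, acting as 3-cycles on this set with disjoint supports. -/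
lemma map_span_single (f : (Fin 4 → ℝ) →ₗ[ℝ] (Fin 4 → ℝ)) (v : Fin 4 → ℝ) :
    Submodule.map f (ℝ ∙ v) = ℝ ∙ (f v) := by
  rw [Submodule.map_span, Set.image_singleton]

lemma span_neg' (v : Fin 4 → ℝ) : (ℝ ∙ (-v)) = ℝ ∙ v := by
  rw [show ({-v} : Set (Fin 4 → ℝ)) = -{v} by simp, Submodule.span_neg]

lemma key (M : Matrix (Fin 4) (Fin 4) ℝ) (v w : Fin 4 → ℝ) (h : M.mulVec v = w) :
    Submodule.map M.mulVecLin (ℝ ∙ v) = ℝ ∙ w := by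
  rw [map_span_single, Matrix.mulVecLin_apply, h]

lemma keyneg (M : Matrix (Fin 4) (Fin 4) ℝ) (v w : Fin 4 → ℝ) (h : M.mulVec v = -w) :
    Submodule.map M.mulVecLin (ℝ ∙ v) = ℝ ∙ w := by
  rw [map_span_single, Matrix.mulVecLin_apply, h, span_neg']

lemma span_ne (v w : Fin 4 → ℝ) (i : Fin 4) (hv : v i ≠ 0) (hw : w i = 0) :
    (ℝ ∙ v) ≠ ℝ ∙ w := by
  intro h
  have hm : v ∈ (ℝ ∙ w) := h ▸ Submodule.mem_span_singleton_self v
  obtain ⟨a, ha⟩ := Submodule.mem_span_singleton.mp hm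
  apply hv
  rw [← congrFun ha i]
  simp [hw]

/-- For a₁ = a₂ = b₃ = b₄ = 1, the matrices A and B each permute the five lines
in ℝ⁴ spanned by e₁, e₂, e₃, e₄ and e₁+e₂-e₃-e₄: A fixes the lines of e₁, e₂ and
acts as the 3-cycle (e₃ e₄ v₅), while B fixes the lines of e₃, e₄ and acts as the
3-cycle (e₂ e₁ v₅); in particular the fixed lines of the two 3-cycles are
disjoint. -/
theorem five_lines_permuted (A B : Matrix (Fin 4) (Fin 4) ℝ)
    (hA : A = !![1, 0, 0, 1; 0, 1, 0, 1; 0, 0, 0, -1; 0, 0, 1, -1])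
    (hB : B = !![-1, 1, 0, 0; -1, 0, 0, 0; 1, 0, 1, 0; 1, 0, 0, 1])
    (L₁ L₂ L₃ L₄ L₅ : Submodule ℝ (Fin 4 → ℝ))
    (h₁ : L₁ = ℝ ∙ ![1, 0, 0, 0]) (h₂ : L₂ = ℝ ∙ ![0, 1, 0, 0])
    (h₃ : L₃ = ℝ ∙ ![0, 0, 1, 0]) (h₄ : L₄ = ℝ ∙ ![0, 0, 0, 1])
    (h₅ : L₅ = ℝ ∙ ![1, 1, -1, -1]) :
    (Submodule.map A.mulVecLin L₁ = L₁ ∧ Submodule.map A.mulVecLin L₂ = L₂ ∧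
     Submodule.map A.mulVecLin L₃ = L₄ ∧ Submodule.map A.mulVecLin L₄ = L₅ ∧
     Submodule.map A.mulVecLin L₅ = L₃) ∧
    (Submodule.map B.mulVecLin L₃ = L₃ ∧ Submodule.map B.mulVecLin L₄ = L₄ ∧
     Submodule.map B.mulVecLin L₂ = L₁ ∧ Submodule.map B.mulVecLin L₁ = L₅ ∧
     Submodule.map B.mulVecLin L₅ = L₂) ∧
    ({L₁, L₂} : Set (Submodule ℝ (Fin 4 → ℝ))) ∩ {L₃, L₄} = ∅ := by
  subst hA hB h₁ h₂ h₃ h₄ h₅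
  refine ⟨⟨key _ _ _ ?_, key _ _ _ ?_, key _ _ _ ?_, key _ _ _ ?_, key _ _ _ ?_⟩,
          ⟨key _ _ _ ?_, key _ _ _ ?_, key _ _ _ ?_, keyneg _ _ _ ?_, keyneg _ _ _ ?_⟩, ?disj⟩
  case disj =>
    rw [Set.eq_empty_iff_forall_notMem]
    rintro x ⟨hx, hy⟩
    rcases hx with rfl | rfl <;> rcases hy with h | h <;>
      first
      | exact span_ne _ _ 0 one_ne_zero rfl h
      | exact span_ne _ _ 1 one_ne_zero rfl h
  all_goals
    funext i
    fin_cases i <;>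
      norm_num [Matrix.mulVec, dotProduct, Fin.sum_univ_four, Matrix.cons_val_two, Matrix.cons_val_three]
end

section
/- For real w, x, y, z, the characteristic polynomial identity: the 4×4 matrix AC (with A, B as above, C = ABA⁻¹B⁻¹, and w = a₁b₄, x = a₁b₃, y = a₂b₃, z = a₂b₄) has characteristic polynomial (λ-1)(λ³ + (-yx - w + 2x + 2y - z)λ² + (zw - 2w + x + y - 2z)λ - 1). -/
open Polynomial in
set_option maxHeartbeats 1000000 in
/-- The characteristic polynomial of A·Comm, where Comm = ABA⁻¹B⁻¹ = ABA²B², is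
(λ-1)(λ³ + (-yx - w + 2x + 2y - z)λ² + (zw - 2w + x + y - 2z)λ - 1), where
w = a₁b₄, x = a₁b₃, y = a₂b₃, z = a₂b₄. -/
theorem charpoly_AC (a₁ a₂ b₃ b₄ w x y z : ℝ)
    (A B Comm : Matrix (Fin 4) (Fin 4) ℝ)
    (hA : A = !![1, 0, 0, a₁; 0, 1, 0, a₂; 0, 0, 0, -1; 0, 0, 1, -1])
    (hB : B = !![-1, 1, 0, 0; -1, 0, 0, 0; b₃, 0, 1, 0; b₄, 0, 0, 1])
    (hComm : Comm = A * B * A ^ 2 * B ^ 2)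
    (hw : w = a₁ * b₄) (hx : x = a₁ * b₃) (hy : y = a₂ * b₃) (hz : z = a₂ * b₄) :
    (A * Comm).charpoly =
      (X - 1) * (X ^ 3 + Polynomial.C (-(y * x) - w + 2 * x + 2 * y - z) * X ^ 2
        + Polynomial.C (z * w - 2 * w + x + y - 2 * z) * X - 1) := by
  subst hA hB hComm hw hx hy hz
  have hM : (!![1, 0, 0, a₁; 0, 1, 0, a₂; 0, 0, 0, -1; 0, 0, 1, -1] *
      (!![1, 0, 0, a₁; 0, 1, 0, a₂; 0, 0, 0, -1; 0, 0, 1, -1] *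
        !![-1, 1, 0, 0; -1, 0, 0, 0; b₃, 0, 1, 0; b₄, 0, 0, 1] *
        !![1, 0, 0, a₁; 0, 1, 0, a₂; 0, 0, 0, -1; 0, 0, 1, -1] ^ 2 *
        !![-1, 1, 0, 0; -1, 0, 0, 0; b₃, 0, 1, 0; b₄, 0, 0, 1] ^ 2) : Matrix (Fin 4) (Fin 4) ℝ) =
      !![1, a₁*b₄ - 3*(a₁*b₃) + a₁^2*b₃^2 + a₂*b₃, -2*a₁ + a₁^2*b₃ + a₂, a₁;
         0, 1 + a₁*a₂*b₃^2 - a₁*b₃ + a₂*b₄ - 2*(a₂*b₃), -a₁ + a₁*a₂*b₃ - a₂, a₂;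
         0, a₁*b₄*b₃ - a₁*b₃^2 - 2*b₄ + b₃, a₁*b₄ - a₁*b₃, -1;
         0, -(a₁*b₃^2) - b₄ + 2*b₃, 1 - a₁*b₃, -1] := by
    simp only [pow_two]
    ext i j
    fin_cases i <;> fin_cases j <;>
      simp [Matrix.mul_apply, Fin.sum_univ_succ, Matrix.vecHead, Matrix.vecTail] <;> ring
  rw [hM, Matrix.charpoly]
  have hc : Matrix.charmatrix (!![1, a₁*b₄ - 3*(a₁*b₃) + a₁^2*b₃^2 + a₂*b₃, -2*a₁ + a₁^2*b₃ + a₂, a₁;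
         0, 1 + a₁*a₂*b₃^2 - a₁*b₃ + a₂*b₄ - 2*(a₂*b₃), -a₁ + a₁*a₂*b₃ - a₂, a₂;
         0, a₁*b₄*b₃ - a₁*b₃^2 - 2*b₄ + b₃, a₁*b₄ - a₁*b₃, -1;
         0, -(a₁*b₃^2) - b₄ + 2*b₃, 1 - a₁*b₃, -1] : Matrix (Fin 4) (Fin 4) ℝ) =
      !![X - C 1, -C (a₁*b₄ - 3*(a₁*b₃) + a₁^2*b₃^2 + a₂*b₃), -C (-2*a₁ + a₁^2*b₃ + a₂), -C a₁;
         0, X - C (1 + a₁*a₂*b₃^2 - a₁*b₃ + a₂*b₄ - 2*(a₂*b₃)), -C (-a₁ + a₁*a₂*b₃ - a₂), -C a₂;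
         0, -C (a₁*b₄*b₃ - a₁*b₃^2 - 2*b₄ + b₃), X - C (a₁*b₄ - a₁*b₃), -C (-1);
         0, -C (-(a₁*b₃^2) - b₄ + 2*b₃), -C (1 - a₁*b₃), X - C (-1)] := by
    ext i j
    fin_cases i <;> fin_cases j <;>
      simp [Matrix.charmatrix_apply_eq, Matrix.charmatrix_apply_ne, Matrix.vecHead,
        Matrix.vecTail]
  rw [hc]
  simp [Matrix.det_succ_row_zero, Fin.sum_univ_succ, map_ofNat, map_sub, map_add, map_mul,
    map_neg, map_pow]
  left
  ring
end

section
/- If a monic real cubic polynomial λ³ + pλ² + qλ - 1 has nonnegative discriminant, then all its roots are real; consequently, for (w,x,y,z) on the surface {w+x+y+z = 3+wy, wy = xz} (away from xy - x - y = 0), all eigenvalues of the matrix AC are real. -/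
private lemma cubic_real_aux (p q : ℝ)
    (hD : -18 * p * q + 4 * p ^ 3 + p ^ 2 * q ^ 2 - 4 * q ^ 3 - 27 ≥ 0)
    (μ : ℂ) (h : μ ^ 3 + (p : ℂ) * μ ^ 2 + (q : ℂ) * μ - 1 = 0) : μ.im = 0 := by
  by_contra hb
  have hre := congrArg Complex.re h
  have him := congrArg Complex.im h
  simp [pow_succ, Complex.mul_re, Complex.mul_im, Complex.add_re, Complex.add_im,
    Complex.sub_re, Complex.sub_im, Complex.ofReal_re, Complex.ofReal_im] at hre him
  set a := μ.re
  set b := μ.im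
  have hIq : 3 * a ^ 2 - b ^ 2 + 2 * p * a + q = 0 := by
    apply mul_left_cancel₀ hb
    linear_combination him
  have key : -18 * p * q + 4 * p ^ 3 + p ^ 2 * q ^ 2 - 4 * q ^ 3 - 27
      = -(4 * b ^ 2 * ((3 * a + p) ^ 2 + b ^ 2) ^ 2) := by
    linear_combination (27 - 4*p^3 - 9*b^2*p - 36*a*p^2 - 54*a*b^2 - 81*a^2*p - 54*a^3) * hre
      + ((-4*q^2 - 18*p + p^2*q - 4*b^2*q + b^2*p^2 - 4*b^4 + 8*a*p*q - 2*a*p^3 + 16*a*b^2*p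
          + 12*a^2*q - 19*a^2*p^2 + 24*a^2*b^2 - 48*a^3*p - 36*a^4)
        - a * (27 - 4*p^3 - 9*b^2*p - 36*a*p^2 - 54*a*b^2 - 81*a^2*p - 54*a^3)) * hIq
  have hpos : 0 < 4 * b ^ 2 * ((3 * a + p) ^ 2 + b ^ 2) ^ 2 := by positivity
  linarith [hD.trans_eq key]

open Polynomial in
private lemma charpoly_eval_aux {n : ℕ} (M : Matrix (Fin n) (Fin n) ℂ) (μ : ℂ) :
    (Matrix.charpoly M).eval μ =
      (μ • (1 : Matrix (Fin n) (Fin n) ℂ) - M).det := by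
  rw [Matrix.charpoly, ← Polynomial.coe_evalRingHom, RingHom.map_det]
  congr 1
  ext i j
  by_cases h : i = j
  · subst h; simp [Matrix.charmatrix_apply_eq, Matrix.one_apply]
  · simp [Matrix.charmatrix_apply_ne _ _ _ h, Matrix.one_apply, h]

private lemma det_fin_four_aux {α : Type*} [CommRing α]
    (a₁₁ a₁₂ a₁₃ a₁₄ a₂₁ a₂₂ a₂₃ a₂₄ a₃₁ a₃₂ a₃₃ a₃₄ a₄₁ a₄₂ a₄₃ a₄₄ : α) :
    (!![a₁₁, a₁₂, a₁₃, a₁₄; a₂₁, a₂₂, a₂₃, a₂₄; a₃₁, a₃₂, a₃₃, a₃₄;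
        a₄₁, a₄₂, a₄₃, a₄₄] : Matrix (Fin 4) (Fin 4) α).det =
      a₁₁*(a₂₂*(a₃₃*a₄₄ - a₃₄*a₄₃) - a₂₃*(a₃₂*a₄₄ - a₃₄*a₄₂) + a₂₄*(a₃₂*a₄₃ - a₃₃*a₄₂))
    - a₁₂*(a₂₁*(a₃₃*a₄₄ - a₃₄*a₄₃) - a₂₃*(a₃₁*a₄₄ - a₃₄*a₄₁) + a₂₄*(a₃₁*a₄₃ - a₃₃*a₄₁))
    + a₁₃*(a₂₁*(a₃₂*a₄₄ - a₃₄*a₄₂) - a₂₂*(a₃₁*a₄₄ - a₃₄*a₄₁) + a₂₄*(a₃₁*a₄₂ - a₃₂*a₄₁))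
    - a₁₄*(a₂₁*(a₃₂*a₄₃ - a₃₃*a₄₂) - a₂₂*(a₃₁*a₄₃ - a₃₃*a₄₁) + a₂₃*(a₃₁*a₄₂ - a₃₂*a₄₁)) := by
  simp only [Matrix.det_succ_row_zero, ← Nat.not_even_iff_odd, Matrix.submatrix_apply,
    Fin.succ_zero_eq_one, Matrix.submatrix_submatrix, Matrix.det_unique, Fin.default_eq_zero,
    Function.comp_apply, Fin.succ_one_eq_two, Fin.sum_univ_succ, Fin.val_zero, Fin.zero_succAbove,
    Finset.univ_unique, Fin.val_succ, Fin.val_eq_zero, Fin.succ_succAbove_zero,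
    Finset.sum_singleton, Fin.succ_succAbove_one, Even.add_self]
  simp [Fin.succAbove, Fin.lt_def, Fin.castSucc, Fin.castAdd, Fin.castLE]
  ring

private lemma mul_fin_four_aux {α : Type*} [CommRing α]
    (a₁₁ a₁₂ a₁₃ a₁₄ a₂₁ a₂₂ a₂₃ a₂₄ a₃₁ a₃₂ a₃₃ a₃₄ a₄₁ a₄₂ a₄₃ a₄₄
     b₁₁ b₁₂ b₁₃ b₁₄ b₂₁ b₂₂ b₂₃ b₂₄ b₃₁ b₃₂ b₃₃ b₃₄ b₄₁ b₄₂ b₄₃ b₄₄ : α) :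
    !![a₁₁, a₁₂, a₁₃, a₁₄; a₂₁, a₂₂, a₂₃, a₂₄; a₃₁, a₃₂, a₃₃, a₃₄; a₄₁, a₄₂, a₄₃, a₄₄] *
    !![b₁₁, b₁₂, b₁₃, b₁₄; b₂₁, b₂₂, b₂₃, b₂₄; b₃₁, b₃₂, b₃₃, b₃₄; b₄₁, b₄₂, b₄₃, b₄₄] =
    !![a₁₁*b₁₁ + a₁₂*b₂₁ + a₁₃*b₃₁ + a₁₄*b₄₁, a₁₁*b₁₂ + a₁₂*b₂₂ + a₁₃*b₃₂ + a₁₄*b₄₂,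
       a₁₁*b₁₃ + a₁₂*b₂₃ + a₁₃*b₃₃ + a₁₄*b₄₃, a₁₁*b₁₄ + a₁₂*b₂₄ + a₁₃*b₃₄ + a₁₄*b₄₄;
       a₂₁*b₁₁ + a₂₂*b₂₁ + a₂₃*b₃₁ + a₂₄*b₄₁, a₂₁*b₁₂ + a₂₂*b₂₂ + a₂₃*b₃₂ + a₂₄*b₄₂,
       a₂₁*b₁₃ + a₂₂*b₂₃ + a₂₃*b₃₃ + a₂₄*b₄₃, a₂₁*b₁₄ + a₂₂*b₂₄ + a₂₃*b₃₄ + a₂₄*b₄₄;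
       a₃₁*b₁₁ + a₃₂*b₂₁ + a₃₃*b₃₁ + a₃₄*b₄₁, a₃₁*b₁₂ + a₃₂*b₂₂ + a₃₃*b₃₂ + a₃₄*b₄₂,
       a₃₁*b₁₃ + a₃₂*b₂₃ + a₃₃*b₃₃ + a₃₄*b₄₃, a₃₁*b₁₄ + a₃₂*b₂₄ + a₃₃*b₃₄ + a₃₄*b₄₄;
       a₄₁*b₁₁ + a₄₂*b₂₁ + a₄₃*b₃₁ + a₄₄*b₄₁, a₄₁*b₁₂ + a₄₂*b₂₂ + a₄₃*b₃₂ + a₄₄*b₄₂,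
       a₄₁*b₁₃ + a₄₂*b₂₃ + a₄₃*b₃₃ + a₄₄*b₄₃, a₄₁*b₁₄ + a₄₂*b₂₄ + a₄₃*b₃₄ + a₄₄*b₄₄] := by
  ext i j
  fin_cases i <;> fin_cases j <;> simp [Matrix.mul_apply, Fin.sum_univ_four]

private lemma eq_fin_four_aux {α : Type*} [CommRing α]
    {a₁₁ a₁₂ a₁₃ a₁₄ a₂₁ a₂₂ a₂₃ a₂₄ a₃₁ a₃₂ a₃₃ a₃₄ a₄₁ a₄₂ a₄₃ a₄₄
     b₁₁ b₁₂ b₁₃ b₁₄ b₂₁ b₂₂ b₂₃ b₂₄ b₃₁ b₃₂ b₃₃ b₃₄ b₄₁ b₄₂ b₄₃ b₄₄ : α}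
    (h₁₁ : a₁₁ = b₁₁) (h₁₂ : a₁₂ = b₁₂) (h₁₃ : a₁₃ = b₁₃) (h₁₄ : a₁₄ = b₁₄)
    (h₂₁ : a₂₁ = b₂₁) (h₂₂ : a₂₂ = b₂₂) (h₂₃ : a₂₃ = b₂₃) (h₂₄ : a₂₄ = b₂₄)
    (h₃₁ : a₃₁ = b₃₁) (h₃₂ : a₃₂ = b₃₂) (h₃₃ : a₃₃ = b₃₃) (h₃₄ : a₃₄ = b₃₄)
    (h₄₁ : a₄₁ = b₄₁) (h₄₂ : a₄₂ = b₄₂) (h₄₃ : a₄₃ = b₄₃) (h₄₄ : a₄₄ = b₄₄) :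
    !![a₁₁, a₁₂, a₁₃, a₁₄; a₂₁, a₂₂, a₂₃, a₂₄; a₃₁, a₃₂, a₃₃, a₃₄; a₄₁, a₄₂, a₄₃, a₄₄] =
    !![b₁₁, b₁₂, b₁₃, b₁₄; b₂₁, b₂₂, b₂₃, b₂₄; b₃₁, b₃₂, b₃₃, b₃₄; b₄₁, b₄₂, b₄₃, b₄₄] := by
  subst h₁₁ h₁₂ h₁₃ h₁₄ h₂₁ h₂₂ h₂₃ h₂₄ h₃₁ h₃₂ h₃₃ h₃₄ h₄₁ h₄₂ h₄₃ h₄₄; rfl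

private lemma AComm_eq (a₁ a₂ b₃ b₄ : ℝ) (A B Comm : Matrix (Fin 4) (Fin 4) ℝ)
    (hA : A = !![1, 0, 0, a₁; 0, 1, 0, a₂; 0, 0, 0, -1; 0, 0, 1, -1])
    (hB : B = !![-1, 1, 0, 0; -1, 0, 0, 0; b₃, 0, 1, 0; b₄, 0, 0, 1])
    (hC : Comm = A * B * A ^ 2 * B ^ 2) :
    A * Comm = !![1, a₂*b₃ + a₁*b₄ - 3*a₁*b₃ + a₁^2*b₃^2, a₂ - 2*a₁ + a₁^2*b₃, a₁;
                  0, 1 + a₂*b₄ - 2*a₂*b₃ - a₁*b₃ + a₁*a₂*b₃^2, -a₂ - a₁ + a₁*a₂*b₃, a₂;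
                  0, -2*b₄ + b₃ + a₁*b₃*b₄ - a₁*b₃^2, a₁*b₄ - a₁*b₃, -1;
                  0, -b₄ + 2*b₃ - a₁*b₃^2, 1 - a₁*b₃, -1] := by
  subst hA hB hC
  have hAB : (!![1, 0, 0, a₁; 0, 1, 0, a₂; 0, 0, 0, -1; 0, 0, 1, -1] *
      !![-1, 1, 0, 0; -1, 0, 0, 0; b₃, 0, 1, 0; b₄, 0, 0, 1] : Matrix (Fin 4) (Fin 4) ℝ) =
      !![-1 + a₁*b₄, 1, 0, a₁; -1 + a₂*b₄, 0, 0, a₂; -b₄, 0, 0, -1; -b₄ + b₃, 0, 1, -1] := by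
    rw [mul_fin_four_aux]; apply eq_fin_four_aux <;> ring
  have hAA : (!![1, 0, 0, a₁; 0, 1, 0, a₂; 0, 0, 0, -1; 0, 0, 1, -1] ^ 2 :
      Matrix (Fin 4) (Fin 4) ℝ) =
      !![1, 0, a₁, 0; 0, 1, a₂, 0; 0, 0, -1, 1; 0, 0, -1, 0] := by
    rw [pow_two, mul_fin_four_aux]; apply eq_fin_four_aux <;> ring
  have hBB : (!![-1, 1, 0, 0; -1, 0, 0, 0; b₃, 0, 1, 0; b₄, 0, 0, 1] ^ 2 :
      Matrix (Fin 4) (Fin 4) ℝ) =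
      !![0, -1, 0, 0; 1, -1, 0, 0; 0, b₃, 1, 0; 0, b₄, 0, 1] := by
    rw [pow_two, mul_fin_four_aux]; apply eq_fin_four_aux <;> ring
  have hC1 : (!![-1 + a₁*b₄, 1, 0, a₁; -1 + a₂*b₄, 0, 0, a₂; -b₄, 0, 0, -1; -b₄ + b₃, 0, 1, -1] *
      !![1, 0, a₁, 0; 0, 1, a₂, 0; 0, 0, -1, 1; 0, 0, -1, 0] : Matrix (Fin 4) (Fin 4) ℝ) =
      !![-1 + a₁*b₄, 1, a₂ - 2*a₁ + a₁^2*b₄, 0; -1 + a₂*b₄, 0, -a₂ - a₁ + a₁*a₂*b₄, 0;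
         -b₄, 0, 1 - a₁*b₄, 0; -b₄ + b₃, 0, -a₁*b₄ + a₁*b₃, 1] := by
    rw [mul_fin_four_aux]; apply eq_fin_four_aux <;> ring
  have hComm : (!![-1 + a₁*b₄, 1, a₂ - 2*a₁ + a₁^2*b₄, 0; -1 + a₂*b₄, 0, -a₂ - a₁ + a₁*a₂*b₄, 0;
         -b₄, 0, 1 - a₁*b₄, 0; -b₄ + b₃, 0, -a₁*b₄ + a₁*b₃, 1] *
      !![0, -1, 0, 0; 1, -1, 0, 0; 0, b₃, 1, 0; 0, b₄, 0, 1] : Matrix (Fin 4) (Fin 4) ℝ) =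
      !![1, a₂*b₃ - a₁*b₄ - 2*a₁*b₃ + a₁^2*b₃*b₄, a₂ - 2*a₁ + a₁^2*b₄, 0;
         0, 1 - a₂*b₄ - a₂*b₃ - a₁*b₃ + a₁*a₂*b₃*b₄, -a₂ - a₁ + a₁*a₂*b₄, 0;
         0, b₄ + b₃ - a₁*b₃*b₄, 1 - a₁*b₄, 0;
         0, 2*b₄ - b₃ - a₁*b₃*b₄ + a₁*b₃^2, -a₁*b₄ + a₁*b₃, 1] := by
    rw [mul_fin_four_aux]; apply eq_fin_four_aux <;> ring
  rw [hAB, hAA, hBB, hC1, hComm, mul_fin_four_aux]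
  apply eq_fin_four_aux <;> ring

set_option maxHeartbeats 2000000 in
/-- If a monic real cubic λ³ + pλ² + qλ - 1 has nonnegative discriminant then all
its complex roots are real; consequently, for (w,x,y,z) = (a₁b₄,a₁b₃,a₂b₃,a₂b₄)
on the surface {w+x+y+z = 3+wy, wy = xz} with xy - x - y ≠ 0, all eigenvalues of
A·Comm (the complex roots of its characteristic polynomial) are real. -/
theorem eigenvalues_real :
    (∀ p q : ℝ,
      -18 * p * q + 4 * p ^ 3 + p ^ 2 * q ^ 2 - 4 * q ^ 3 - 27 ≥ 0 →
      ∀ μ : ℂ, μ ^ 3 + (p : ℂ) * μ ^ 2 + (q : ℂ) * μ - 1 = 0 → μ.im = 0) ∧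
    (∀ a₁ a₂ b₃ b₄ w x y z : ℝ, ∀ A B Comm : Matrix (Fin 4) (Fin 4) ℝ,
      A = !![1, 0, 0, a₁; 0, 1, 0, a₂; 0, 0, 0, -1; 0, 0, 1, -1] →
      B = !![-1, 1, 0, 0; -1, 0, 0, 0; b₃, 0, 1, 0; b₄, 0, 0, 1] →
      Comm = A * B * A ^ 2 * B ^ 2 →
      w = a₁ * b₄ → x = a₁ * b₃ → y = a₂ * b₃ → z = a₂ * b₄ →
      w + x + y + z = 3 + w * y → w * y = x * z →
      x * y - x - y ≠ 0 →
      ∀ μ : ℂ, (((A * Comm).map (algebraMap ℝ ℂ)).charpoly).IsRoot μ → μ.im = 0) := by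
  constructor
  · exact cubic_real_aux
  intro a₁ a₂ b₃ b₄ w x y z A B Comm hA hB hC hw hx hy hz hsum hxz hk μ hroot
  -- the explicit matrix
  rw [AComm_eq a₁ a₂ b₃ b₄ A B Comm hA hB hC] at hroot
  -- the real coefficients of the cubic factor
  obtain ⟨pr, hpr⟩ : ∃ r : ℝ, r = -(x*y) - w + 2*x + 2*y - z := ⟨_, rfl⟩
  obtain ⟨qr, hqr⟩ : ∃ r : ℝ, r = z*w - 2*w + x + y - 2*z := ⟨_, rfl⟩
  -- the determinant equation
  have hdet := hroot
  rw [Polynomial.IsRoot, charpoly_eval_aux] at hdet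
  rw [show μ • (1 : Matrix (Fin 4) (Fin 4) ℂ) -
      (!![1, a₂*b₃ + a₁*b₄ - 3*a₁*b₃ + a₁^2*b₃^2, a₂ - 2*a₁ + a₁^2*b₃, a₁;
          0, 1 + a₂*b₄ - 2*a₂*b₃ - a₁*b₃ + a₁*a₂*b₃^2, -a₂ - a₁ + a₁*a₂*b₃, a₂;
          0, -2*b₄ + b₃ + a₁*b₃*b₄ - a₁*b₃^2, a₁*b₄ - a₁*b₃, -1;
          0, -b₄ + 2*b₃ - a₁*b₃^2, 1 - a₁*b₃, -1] : Matrix (Fin 4) (Fin 4) ℝ).map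
        (algebraMap ℝ ℂ)
    = !![μ - 1, -((a₂*b₃ + a₁*b₄ - 3*a₁*b₃ + a₁^2*b₃^2 : ℝ) : ℂ),
          -((a₂ - 2*a₁ + a₁^2*b₃ : ℝ) : ℂ), -((a₁ : ℝ) : ℂ);
         0, μ - ((1 + a₂*b₄ - 2*a₂*b₃ - a₁*b₃ + a₁*a₂*b₃^2 : ℝ) : ℂ),
          -((-a₂ - a₁ + a₁*a₂*b₃ : ℝ) : ℂ), -((a₂ : ℝ) : ℂ);
         0, -((-2*b₄ + b₃ + a₁*b₃*b₄ - a₁*b₃^2 : ℝ) : ℂ), μ - ((a₁*b₄ - a₁*b₃ : ℝ) : ℂ), 1;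
         0, -((-b₄ + 2*b₃ - a₁*b₃^2 : ℝ) : ℂ), -((1 - a₁*b₃ : ℝ) : ℂ), μ + 1] from by
      ext i j
      fin_cases i <;> fin_cases j <;>
        simp [Matrix.map_apply, Matrix.one_apply, Matrix.vecHead, Matrix.vecTail],
    det_fin_four_aux] at hdet
  -- factor the characteristic polynomial
  have hfac : (μ - 1) * (μ ^ 3 + (pr : ℂ) * μ ^ 2 + (qr : ℂ) * μ - 1) = 0 := by
    rw [hpr, hqr, hw, hx, hy, hz]
    push_cast at hdet ⊢
    linear_combination hdet
  -- discriminant of the cubic factor is nonnegative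
  have hwk : w * (x*y - x - y) = x * (x + y - 3) := by linear_combination (-x) * hsum - hxz
  have hzk : z * (x*y - x - y) = y * (x + y - 3) := by
    linear_combination (-y) * hsum + (1 - y) * hxz
  have hP : pr * (x*y - x - y) = (-(x*y) + 2*x + 2*y) * (x*y - x - y)
      - x*(x + y - 3) - y*(x + y - 3) := by
    rw [hpr]; linear_combination (-1 : ℝ) * hwk - hzk
  have hQ : qr * (x*y - x - y)^2 = x*y*(x + y - 3)^2 - 2*x*(x + y - 3)*(x*y - x - y)
      + (x + y)*(x*y - x - y)^2 - 2*y*(x + y - 3)*(x*y - x - y) := by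
    rw [hqr]
    linear_combination (w*(x*y - x - y) - 2*(x*y - x - y)) * hzk
      + (y*(x + y - 3) - 2*(x*y - x - y)) * hwk
  have hk6 : (0:ℝ) < (x*y - x - y) ^ 6 := by positivity
  have hSq : (-18 * pr * qr + 4 * pr ^ 3 + pr ^ 2 * qr ^ 2 - 4 * qr ^ 3 - 27)
      * (x*y - x - y) ^ 6
      = ((y^2 - 3*y + 3) * (x^2 - 3*x + 3) * (x - y)
          * (x^2*y^2 - 3*x^2*y - 3*x*y^2 + 3*x^2 + 3*x*y + 3*y^2)) ^ 2 := by
    obtain ⟨k, hkdef⟩ : ∃ r : ℝ, r = x*y - x - y := ⟨_, rfl⟩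
    rw [← hkdef] at hP hQ ⊢
    obtain ⟨Pn, hPn⟩ : ∃ r : ℝ, r = (-(x*y) + 2*x + 2*y) * k - x*(x + y - 3) - y*(x + y - 3) :=
      ⟨_, rfl⟩
    obtain ⟨Qn, hQn⟩ : ∃ r : ℝ, r = x*y*(x + y - 3)^2 - 2*x*(x + y - 3)*k + (x + y)*k^2
      - 2*y*(x + y - 3)*k := ⟨_, rfl⟩
    rw [← hPn] at hP
    rw [← hQn] at hQ
    have key : (-18 * pr * qr + 4 * pr ^ 3 + pr ^ 2 * qr ^ 2 - 4 * qr ^ 3 - 27) * k^6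
        = -18 * Pn * Qn * k^3 + 4 * Pn^3 * k^3 + Pn^2 * Qn^2 - 4 * Qn^3 - 27 * k^6 := by
      linear_combination
        (-18*k^3*(qr*k^2) + 4*k^3*((pr*k)^2 + (pr*k)*Pn + Pn^2)
          + ((pr*k) + Pn)*(qr*k^2)^2) * hP
        + (-18*k^3*Pn + Pn^2*((qr*k^2) + Qn)
          - 4*((qr*k^2)^2 + (qr*k^2)*Qn + Qn^2)) * hQ
    rw [key, hPn, hQn, hkdef]
    ring
  have hD : -18 * pr * qr + 4 * pr ^ 3 + pr ^ 2 * qr ^ 2 - 4 * qr ^ 3 - 27 ≥ 0 := by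
    by_contra hneg
    push_neg at hneg
    have h1 : (-18 * pr * qr + 4 * pr ^ 3 + pr ^ 2 * qr ^ 2 - 4 * qr ^ 3 - 27)
        * (x*y - x - y) ^ 6 < 0 := mul_neg_of_neg_of_pos hneg hk6
    rw [hSq] at h1
    exact absurd h1 (not_lt.mpr (sq_nonneg _))
  -- conclude
  rcases mul_eq_zero.mp hfac with h1 | h3
  · rw [sub_eq_zero.mp h1]
    rfl
  · exact cubic_real_aux pr qr hD μ h3
end
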